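/- arXiv:1804.03438 — 7 statements merged into one kernel-verified Lean document; each statement's English description precedes it below -/
import Mathlib

section
/- Let H be a complex separable infinite-dimensional Hilbert space, T a bounded bijective linear operator on H, and f₀ ∈ H such that (Tⁿf₀)_{n∈ℤ} is a frame for H with frame bounds A and B. Then for all f ∈ H and all n ∈ ℤ one has ‖Tⁿf‖ ≥ √(A/B)·‖f‖ and ‖(T*)ⁿf‖ ≥ √(A/B)·‖f‖. -/
open MeasureTheory
noncomputable section

/-- If `(Tⁿf₀)_{n∈ℤ}` is a frame for `H` with frame bounds `A` and `B` (with `T` a bounded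
bijective operator), then `‖Tⁿf‖ ≥ √(A/B)‖f‖` and `‖(T*)ⁿf‖ ≥ √(A/B)‖f‖` for all `f ∈ H`
and all `n ∈ ℤ`. -/
theorem biinfinite_orbit_norm_bounded_below
    {H : Type*} [NormedAddCommGroup H] [InnerProductSpace ℂ H] [CompleteSpace H]
    [TopologicalSpace.SeparableSpace H] (hdim : ¬ FiniteDimensional ℂ H)
    (T : H ≃L[ℂ] H) (f₀ : H) (A B : ℝ) (hA : 0 < A) (hB : 0 < B)
    (hframe : ∀ f : H,
      A * ‖f‖ ^ 2 ≤ ∑' n : ℤ, ‖(inner ℂ f ((T ^ n) f₀) : ℂ)‖ ^ 2 ∧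
        ∑' n : ℤ, ‖(inner ℂ f ((T ^ n) f₀) : ℂ)‖ ^ 2 ≤ B * ‖f‖ ^ 2) :
    ∀ (f : H) (n : ℤ),
      Real.sqrt (A / B) * ‖f‖ ≤ ‖(T ^ n) f‖ ∧
      Real.sqrt (A / B) * ‖f‖ ≤
        ‖(ContinuousLinearMap.adjoint ((T ^ n : H ≃L[ℂ] H) : H →L[ℂ] H)) f‖ := by
  have hAB : (0:ℝ) < A / B := div_pos hA hB
  set c := Real.sqrt (A / B) with hc_def
  have hc : 0 < c := Real.sqrt_pos.2 hAB
  set S : ℤ → (H →L[ℂ] H) := fun n => ((T ^ n : H ≃L[ℂ] H) : H →L[ℂ] H) with hS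
  -- key: adjoint lower bound
  have key : ∀ (n : ℤ) (f : H),
      c * ‖f‖ ≤ ‖(ContinuousLinearMap.adjoint (S n)) f‖ := by
    intro n f
    set g := (ContinuousLinearMap.adjoint (S n)) f with hg
    have hinner : ∀ m : ℤ,
        (inner ℂ f ((T ^ m) f₀) : ℂ) = inner ℂ g ((T ^ (m - n)) f₀) := by
      intro m
      have h1 : (T ^ m) f₀ = (T ^ n) ((T ^ (m - n)) f₀) := by
        have h2 : T ^ m = T ^ n * T ^ (m - n) := by
          rw [← zpow_add]; ring_nf
        rw [h2]; rfl
      rw [h1, hg, ContinuousLinearMap.adjoint_inner_left]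
      rfl
    have hsum : (∑' m : ℤ, ‖(inner ℂ f ((T ^ m) f₀) : ℂ)‖ ^ 2)
        = ∑' m : ℤ, ‖(inner ℂ g ((T ^ m) f₀) : ℂ)‖ ^ 2 := by
      calc (∑' m : ℤ, ‖(inner ℂ f ((T ^ m) f₀) : ℂ)‖ ^ 2)
          = ∑' m : ℤ, ‖(inner ℂ g ((T ^ (m - n)) f₀) : ℂ)‖ ^ 2 := by
            congr 1; ext m; rw [hinner m]
        _ = ∑' m : ℤ, ‖(inner ℂ g ((T ^ m) f₀) : ℂ)‖ ^ 2 :=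
            (Equiv.subRight n).tsum_eq (fun m => ‖(inner ℂ g ((T ^ m) f₀) : ℂ)‖ ^ 2)
    have h3 : A * ‖f‖ ^ 2 ≤ B * ‖g‖ ^ 2 := by
      calc A * ‖f‖ ^ 2 ≤ ∑' m : ℤ, ‖(inner ℂ f ((T ^ m) f₀) : ℂ)‖ ^ 2 := (hframe f).1
        _ = ∑' m : ℤ, ‖(inner ℂ g ((T ^ m) f₀) : ℂ)‖ ^ 2 := hsum
        _ ≤ B * ‖g‖ ^ 2 := (hframe g).2
    have h4 : A / B * ‖f‖ ^ 2 ≤ ‖g‖ ^ 2 := by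
      rw [div_mul_eq_mul_div, div_le_iff₀ hB]
      linarith
    calc c * ‖f‖ = Real.sqrt (A / B * ‖f‖ ^ 2) := by
          rw [Real.sqrt_mul hAB.le, Real.sqrt_sq (norm_nonneg f)]
      _ ≤ Real.sqrt (‖g‖ ^ 2) := Real.sqrt_le_sqrt h4
      _ = ‖g‖ := Real.sqrt_sq (norm_nonneg g)
  -- composition identities
  have hcomp : ∀ n : ℤ, (S n).comp (S (-n)) = ContinuousLinearMap.id ℂ H := by
    intro n
    ext x
    have h2 : T ^ n * T ^ (-n) = 1 := by rw [← zpow_add]; simp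
    show (T ^ n) ((T ^ (-n)) x) = x
    calc (T ^ n) ((T ^ (-n)) x) = (T ^ n * T ^ (-n)) x := rfl
      _ = x := by rw [h2]; rfl
  have hadj_id : ∀ n : ℤ, ∀ u : H,
      (ContinuousLinearMap.adjoint (S (-n))) ((ContinuousLinearMap.adjoint (S n)) u) = u := by
    intro n u
    have := congrArg ContinuousLinearMap.adjoint (hcomp n)
    rw [ContinuousLinearMap.adjoint_comp, ContinuousLinearMap.adjoint_id] at this
    calc (ContinuousLinearMap.adjoint (S (-n))) ((ContinuousLinearMap.adjoint (S n)) u)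
        = ((ContinuousLinearMap.adjoint (S (-n))).comp
            (ContinuousLinearMap.adjoint (S n))) u := rfl
      _ = u := by rw [this]; rfl
  -- adjoint of S (-n) has pointwise norm ≤ (1/c)
  have hadj_le : ∀ (n : ℤ) (u : H),
      ‖(ContinuousLinearMap.adjoint (S (-n))) u‖ ≤ (1 / c) * ‖u‖ := by
    intro n u
    have h := key n ((ContinuousLinearMap.adjoint (S (-n))) u)
    have h2 := hadj_id (-n) u
    rw [neg_neg] at h2
    rw [h2] at h
    rw [div_mul_eq_mul_div, le_div_iff₀ hc]
    linarith
  have hop : ∀ n : ℤ, ‖S (-n)‖ ≤ 1 / c := by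
    intro n
    have h1 : ‖ContinuousLinearMap.adjoint (S (-n))‖ ≤ 1 / c :=
      ContinuousLinearMap.opNorm_le_bound _ (by positivity) (hadj_le n)
    have h2 : ‖ContinuousLinearMap.adjoint (S (-n))‖ = ‖S (-n)‖ :=
      LinearIsometryEquiv.norm_map ContinuousLinearMap.adjoint (S (-n))
    linarith
  intro f n
  constructor
  · -- forward bound
    have h1 : ‖f‖ ≤ (1 / c) * ‖(T ^ n) f‖ := by
      have h2 : f = (S (-n)) ((S n) f) := by
        have := congrFun (congrArg (fun (L : H →L[ℂ] H) => (L : H → H)) (hcomp (-n))) f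
        simpa using this.symm
      calc ‖f‖ = ‖(S (-n)) ((S n) f)‖ := by rw [← h2]
        _ ≤ ‖S (-n)‖ * ‖(S n) f‖ := (S (-n)).le_opNorm _
        _ ≤ (1 / c) * ‖(T ^ n) f‖ := by
            apply mul_le_mul_of_nonneg_right (hop n) (norm_nonneg _)
    rw [one_div, inv_mul_eq_div, le_div_iff₀ hc] at h1
    linarith [h1]
  · exact key n f
end
end

section
/- Let I = ℕ or I = ℤ, and let F = (f_n)_{n∈I} be a linearly independent frame for a complex separable infinite-dimensional Hilbert space H, with generating operator T : D_F → H and analysis operator C. Then the domain of the adjoint T* is a closed subspace of H, and dom T* = {g ∈ H : there exists h ∈ H such that ⟨f_{n+1}, g⟩ = ⟨f_n, h⟩ for all n ∈ I} = (LC)⁻¹(ran C), the preimage of the range of C under the bounded operator LC, where L is the left shift on ℓ²(I). -/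
open MeasureTheory
noncomputable section

/-- A family `(F n)` is a frame for `H`. -/
def IsFrame {I H : Type*} [NormedAddCommGroup H] [InnerProductSpace ℂ H] (F : I → H) : Prop :=
  ∃ A B : ℝ, 0 < A ∧ 0 < B ∧ ∀ f : H,
    A * ‖f‖ ^ 2 ≤ ∑' n : I, ‖(inner ℂ f (F n) : ℂ)‖ ^ 2 ∧
      ∑' n : I, ‖(inner ℂ f (F n) : ℂ)‖ ^ 2 ≤ B * ‖f‖ ^ 2

lemma frame_aux {H : Type*} [NormedAddCommGroup H] [InnerProductSpace ℂ H] [CompleteSpace H]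
    {I : Type*} (s : I → I) (F : I → H) (T : H →ₗ.[ℂ] H)
    (C : H →L[ℂ] lp (fun _ : I => ℂ) 2)
    (L : lp (fun _ : I => ℂ) 2 →L[ℂ] lp (fun _ : I => ℂ) 2)
    (hF : IsFrame F)
    (hdom : T.domain = Submodule.span ℂ (Set.range F))
    (hT : ∀ (n : I) (hn : F n ∈ T.domain), T ⟨F n, hn⟩ = F (s n))
    (hC : ∀ (g : H) (n : I), (C g) n = (inner ℂ (F n) g : ℂ))
    (hL : ∀ (c : lp (fun _ : I => ℂ) 2) (n : I), (L c) n = c (s n)) :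
    IsClosed {g : H | ∃ h : H, ∀ x : T.domain, (inner ℂ (T x) g : ℂ) = inner ℂ (x : H) h} ∧
    {g : H | ∃ h : H, ∀ x : T.domain, (inner ℂ (T x) g : ℂ) = inner ℂ (x : H) h} =
      {g : H | ∃ h : H, ∀ n : I, (inner ℂ (F (s n)) g : ℂ) = inner ℂ (F n) h} ∧
    {g : H | ∃ h : H, ∀ x : T.domain, (inner ℂ (T x) g : ℂ) = inner ℂ (x : H) h} =
      (fun g : H => L (C g)) ⁻¹' Set.range ⇑C := by
  have hmemF : ∀ n, F n ∈ T.domain := fun n => by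
    rw [hdom]; exact Submodule.subset_span ⟨n, rfl⟩
  -- key pointwise equivalence between S1 and S2
  have key : ∀ g h : H, (∀ x : T.domain, (inner ℂ (T x) g : ℂ) = inner ℂ (x : H) h) ↔
      (∀ n : I, (inner ℂ (F (s n)) g : ℂ) = inner ℂ (F n) h) := by
    intro g h
    constructor
    · intro hx n
      have := hx ⟨F n, hmemF n⟩
      rwa [hT n (hmemF n)] at this
    · intro hn x
      have main : ∀ y ∈ Submodule.span ℂ (Set.range F),
          ∃ hm : y ∈ T.domain, (inner ℂ (T ⟨y, hm⟩) g : ℂ) = inner ℂ y h := by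
        intro y hy'
        induction hy' using Submodule.span_induction with
          | mem x hx =>
            obtain ⟨n, rfl⟩ := hx
            exact ⟨hmemF n, by rw [hT n (hmemF n)]; exact hn n⟩
          | zero =>
            refine ⟨T.domain.zero_mem, ?_⟩
            have : (⟨0, T.domain.zero_mem⟩ : T.domain) = 0 := rfl
            rw [this, T.map_zero, inner_zero_left, inner_zero_left]
          | add x y hx hy ihx ihy =>
            obtain ⟨hmx, ex⟩ := ihx
            obtain ⟨hmy, ey⟩ := ihy
            refine ⟨T.domain.add_mem hmx hmy, ?_⟩
            have : (⟨x + y, T.domain.add_mem hmx hmy⟩ : T.domain)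
                = (⟨x, hmx⟩ : T.domain) + ⟨y, hmy⟩ := rfl
            rw [this, T.map_add, inner_add_left, inner_add_left, ex, ey]
          | smul a x hx ihx =>
            obtain ⟨hmx, ex⟩ := ihx
            refine ⟨T.domain.smul_mem a hmx, ?_⟩
            have : (⟨a • x, T.domain.smul_mem a hmx⟩ : T.domain)
                = a • (⟨x, hmx⟩ : T.domain) := rfl
            rw [this, T.map_smul, inner_smul_left, inner_smul_left, ex]
      obtain ⟨hm, he⟩ := main x.1 (hdom ▸ x.2)
      exact he
  have h12 : {g : H | ∃ h : H, ∀ x : T.domain, (inner ℂ (T x) g : ℂ) = inner ℂ (x : H) h} =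
      {g : H | ∃ h : H, ∀ n : I, (inner ℂ (F (s n)) g : ℂ) = inner ℂ (F n) h} := by
    ext g; exact exists_congr fun h => key g h
  -- S2 = S3
  have h23 : {g : H | ∃ h : H, ∀ n : I, (inner ℂ (F (s n)) g : ℂ) = inner ℂ (F n) h} =
      (fun g : H => L (C g)) ⁻¹' Set.range ⇑C := by
    ext g
    simp only [Set.mem_setOf_eq, Set.mem_preimage, Set.mem_range]
    constructor
    · rintro ⟨h, hh⟩
      refine ⟨h, ?_⟩
      apply lp.ext
      funext n
      rw [hC h n, hL (C g) n, hC g (s n)]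
      exact (hh n).symm
    · rintro ⟨h, hh⟩
      refine ⟨h, fun n => ?_⟩
      have := congrFun (congrArg (Subtype.val) hh) n
      rw [hC h n, hL (C g) n, hC g (s n)] at this
      exact this.symm
  -- lower frame bound ⇒ C bounded below
  obtain ⟨A, B, hA, hB, hfr⟩ := hF
  have hnorm : ∀ g : H, A * ‖g‖ ^ 2 ≤ ‖C g‖ ^ 2 := by
    intro g
    have h1 := (hfr g).1
    have h2 : ‖C g‖ ^ (2 : ℝ) = ∑' n : I, ‖(C g) n‖ ^ (2 : ℝ) := by
      have := lp.norm_rpow_eq_tsum (p := 2) (by norm_num) (C g)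
      simpa using this
    have h3 : ‖C g‖ ^ 2 = ∑' n : I, ‖(C g) n‖ ^ 2 := by
      rw [← Real.rpow_natCast ‖C g‖ 2]
      push_cast
      rw [h2]
      congr 1
      funext n
      rw [← Real.rpow_natCast ‖(C g) n‖ 2]
      push_cast
      ring_nf
    rw [h3]
    calc A * ‖g‖ ^ 2 ≤ ∑' n : I, ‖(inner ℂ g (F n) : ℂ)‖ ^ 2 := h1
      _ = ∑' n : I, ‖(C g) n‖ ^ 2 := by
          congr 1; funext n; rw [hC g n, norm_inner_symm]
  have hbound : ∀ g : H, ‖g‖ ≤ ((⟨(Real.sqrt A)⁻¹, by positivity⟩ : NNReal) : ℝ) * ‖C g‖ := by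
    intro g
    have hs : Real.sqrt A * ‖g‖ ≤ ‖C g‖ := by
      have := Real.sqrt_le_sqrt (hnorm g)
      rwa [Real.sqrt_mul hA.le, Real.sqrt_sq (norm_nonneg g),
        Real.sqrt_sq (norm_nonneg (C g))] at this
    have hsA : 0 < Real.sqrt A := Real.sqrt_pos.mpr hA
    show ‖g‖ ≤ (Real.sqrt A)⁻¹ * ‖C g‖
    rw [inv_mul_eq_div, le_div_iff₀ hsA]
    linarith [hs]
  have hanti : AntilipschitzWith ⟨(Real.sqrt A)⁻¹, by positivity⟩ C :=
    C.antilipschitz_of_bound hbound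
  have hclosedrange : IsClosed (Set.range ⇑C) :=
    hanti.isClosed_range C.uniformContinuous
  have hclosed : IsClosed ((fun g : H => L (C g)) ⁻¹' Set.range ⇑C) :=
    hclosedrange.preimage (L.continuous.comp C.continuous)
  refine ⟨?_, h12, h12.trans h23⟩
  rw [h12, h23]
  exact hclosed

/-- Let `F = (fₙ)_{n∈I}` (`I = ℕ` or `I = ℤ`) be a linearly independent frame for `H` with
generating operator `T : D_F → H` (i.e. `T.domain = span{fₙ}` and `T fₙ = f_{n+1}`), analysis
operator `C` and left shift `L`. Then the domain of `T*` is closed and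
`dom T* = {g | ∃ h, ∀ n, ⟨f_{n+1}, g⟩ = ⟨fₙ, h⟩} = (LC)⁻¹(ran C)`. -/
theorem adjoint_domain_of_generating_operator
    {H : Type*} [NormedAddCommGroup H] [InnerProductSpace ℂ H] [CompleteSpace H]
    [TopologicalSpace.SeparableSpace H] (hdim : ¬ FiniteDimensional ℂ H) :
    (∀ (F : ℕ → H) (T : H →ₗ.[ℂ] H) (C : H →L[ℂ] lp (fun _ : ℕ => ℂ) 2)
        (L : lp (fun _ : ℕ => ℂ) 2 →L[ℂ] lp (fun _ : ℕ => ℂ) 2),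
      LinearIndependent ℂ F → IsFrame F →
      T.domain = Submodule.span ℂ (Set.range F) →
      (∀ (n : ℕ) (hn : F n ∈ T.domain), T ⟨F n, hn⟩ = F (n + 1)) →
      (∀ (g : H) (n : ℕ), (C g) n = (inner ℂ (F n) g : ℂ)) →
      (∀ (c : lp (fun _ : ℕ => ℂ) 2) (n : ℕ), (L c) n = c (n + 1)) →
      IsClosed {g : H | ∃ h : H, ∀ x : T.domain, (inner ℂ (T x) g : ℂ) = inner ℂ (x : H) h} ∧
      {g : H | ∃ h : H, ∀ x : T.domain, (inner ℂ (T x) g : ℂ) = inner ℂ (x : H) h} =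
        {g : H | ∃ h : H, ∀ n : ℕ, (inner ℂ (F (n + 1)) g : ℂ) = inner ℂ (F n) h} ∧
      {g : H | ∃ h : H, ∀ x : T.domain, (inner ℂ (T x) g : ℂ) = inner ℂ (x : H) h} =
        (fun g : H => L (C g)) ⁻¹' Set.range ⇑C) ∧
    (∀ (F : ℤ → H) (T : H →ₗ.[ℂ] H) (C : H →L[ℂ] lp (fun _ : ℤ => ℂ) 2)
        (L : lp (fun _ : ℤ => ℂ) 2 →L[ℂ] lp (fun _ : ℤ => ℂ) 2),
      LinearIndependent ℂ F → IsFrame F →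
      T.domain = Submodule.span ℂ (Set.range F) →
      (∀ (n : ℤ) (hn : F n ∈ T.domain), T ⟨F n, hn⟩ = F (n + 1)) →
      (∀ (g : H) (n : ℤ), (C g) n = (inner ℂ (F n) g : ℂ)) →
      (∀ (c : lp (fun _ : ℤ => ℂ) 2) (n : ℤ), (L c) n = c (n + 1)) →
      IsClosed {g : H | ∃ h : H, ∀ x : T.domain, (inner ℂ (T x) g : ℂ) = inner ℂ (x : H) h} ∧
      {g : H | ∃ h : H, ∀ x : T.domain, (inner ℂ (T x) g : ℂ) = inner ℂ (x : H) h} =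
        {g : H | ∃ h : H, ∀ n : ℤ, (inner ℂ (F (n + 1)) g : ℂ) = inner ℂ (F n) h} ∧
      {g : H | ∃ h : H, ∀ x : T.domain, (inner ℂ (T x) g : ℂ) = inner ℂ (x : H) h} =
        (fun g : H => L (C g)) ⁻¹' Set.range ⇑C) := by
  constructor
  · intro F T C L _ hF hdom hT hC hL
    exact frame_aux (fun n : ℕ => n + 1) F T C L hF hdom hT hC hL
  · intro F T C L _ hF hdom hT hC hL
    exact frame_aux (fun n : ℤ => n + 1) F T C L hF hdom hT hC hL
end
end

section
/- Let I = ℕ or I = ℤ, and let F = (f_n)_{n∈I} be a linearly independent frame for a complex separable infinite-dimensional Hilbert space H, with generating operator T : D_F → H. Then the adjoint T* is bounded, i.e., there exists a constant c ≥ 0 such that ‖T*g‖ ≤ c‖g‖ for all g in dom T*. -/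
open MeasureTheory
noncomputable section


lemma frame_summable {I H : Type*} [NormedAddCommGroup H] [InnerProductSpace ℂ H]
    {F : I → H} {A B : ℝ} (hA : 0 < A)
    (hframe : ∀ f : H, A * ‖f‖ ^ 2 ≤ ∑' n : I, ‖(inner ℂ f (F n) : ℂ)‖ ^ 2 ∧
      ∑' n : I, ‖(inner ℂ f (F n) : ℂ)‖ ^ 2 ≤ B * ‖f‖ ^ 2) (g : H) :
    Summable fun n : I => ‖(inner ℂ g (F n) : ℂ)‖ ^ 2 := by
  by_cases hsum : Summable fun n : I => ‖(inner ℂ g (F n) : ℂ)‖ ^ 2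
  · exact hsum
  · have h0 := (hframe g).1
    rw [tsum_eq_zero_of_not_summable hsum] at h0
    have hsq : ‖g‖ ^ 2 ≤ 0 := le_of_mul_le_mul_left (by linarith) hA
    have hg : ‖g‖ = 0 := sq_eq_zero_iff.mp (le_antisymm hsq (sq_nonneg _))
    have : g = 0 := norm_eq_zero.mp hg
    subst this
    simp only [inner_zero_left, norm_zero]
    simpa using summable_zero

lemma gen_adjoint_bounded {I H : Type*} [NormedAddCommGroup H] [InnerProductSpace ℂ H]
    (F : I → H) (s : I → I) (hs : Function.Injective s) (T : H →ₗ.[ℂ] H)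
    (hF : ∃ A B : ℝ, 0 < A ∧ 0 < B ∧ ∀ f : H,
      A * ‖f‖ ^ 2 ≤ ∑' n : I, ‖(inner ℂ f (F n) : ℂ)‖ ^ 2 ∧
        ∑' n : I, ‖(inner ℂ f (F n) : ℂ)‖ ^ 2 ≤ B * ‖f‖ ^ 2)
    (hdom : T.domain = Submodule.span ℂ (Set.range F))
    (hT : ∀ (n : I) (hn : F n ∈ T.domain), T ⟨F n, hn⟩ = F (s n)) :
    ∃ c : ℝ, 0 ≤ c ∧ ∀ g h : H,
      (∀ x : T.domain, (inner ℂ (T x) g : ℂ) = inner ℂ (x : H) h) → ‖h‖ ≤ c * ‖g‖ := by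
  obtain ⟨A, B, hA, hB, hframe⟩ := hF
  refine ⟨Real.sqrt (B / A), Real.sqrt_nonneg _, fun g h hgh => ?_⟩
  have key : ∀ n : I, ‖(inner ℂ h (F n) : ℂ)‖ = ‖(inner ℂ g (F (s n)) : ℂ)‖ := by
    intro n
    have hn : F n ∈ T.domain := by
      rw [hdom]; exact Submodule.subset_span ⟨n, rfl⟩
    have h1 := hgh ⟨F n, hn⟩
    rw [hT n hn] at h1
    have h2 : (inner ℂ (F (s n)) g : ℂ) = inner ℂ (F n) h := h1
    calc ‖(inner ℂ h (F n) : ℂ)‖ = ‖(inner ℂ (F n) h : ℂ)‖ := norm_inner_symm _ _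
      _ = ‖(inner ℂ (F (s n)) g : ℂ)‖ := by rw [h2]
      _ = ‖(inner ℂ g (F (s n)) : ℂ)‖ := norm_inner_symm _ _
  have hsumg := frame_summable hA hframe g
  have hsumh := frame_summable hA hframe h
  have hle : (∑' n : I, ‖(inner ℂ h (F n) : ℂ)‖ ^ 2) ≤ B * ‖g‖ ^ 2 := by
    have heq : (∑' n : I, ‖(inner ℂ h (F n) : ℂ)‖ ^ 2)
        = ∑' n : I, ‖(inner ℂ g (F (s n)) : ℂ)‖ ^ 2 := by
      congr 1; ext n; rw [key n]
    rw [heq]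
    refine le_trans (Summable.tsum_le_tsum_of_inj s hs (fun c _ => by positivity)
      (fun b => le_refl _) (hsumg.comp_injective hs) hsumg) (hframe g).2
  have h1 : A * ‖h‖ ^ 2 ≤ B * ‖g‖ ^ 2 := le_trans (hframe h).1 hle
  have h2 : ‖h‖ ^ 2 ≤ (B / A) * ‖g‖ ^ 2 := by
    rw [div_mul_eq_mul_div, le_div_iff₀ hA]; nlinarith
  calc ‖h‖ = Real.sqrt (‖h‖ ^ 2) := (Real.sqrt_sq (norm_nonneg _)).symm
    _ ≤ Real.sqrt ((B / A) * ‖g‖ ^ 2) := Real.sqrt_le_sqrt h2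
    _ = Real.sqrt (B / A) * ‖g‖ := by
        rw [Real.sqrt_mul (by positivity), Real.sqrt_sq (norm_nonneg _)]

/-- Let `F = (fₙ)_{n∈I}` (`I = ℕ` or `I = ℤ`) be a linearly independent frame for `H` with
generating operator `T : D_F → H` (i.e. `T.domain = span{fₙ}` and `T fₙ = f_{n+1}`). Then the
adjoint `T*` is bounded: there is `c ≥ 0` with `‖T*g‖ ≤ c‖g‖` for all `g ∈ dom T*`
(`h = T*g` being characterized by `⟨Tf, g⟩ = ⟨f, h⟩` for all `f` in the domain). -/
theorem adjoint_of_generating_operator_bounded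
    {H : Type*} [NormedAddCommGroup H] [InnerProductSpace ℂ H] [CompleteSpace H]
    [TopologicalSpace.SeparableSpace H] (hdim : ¬ FiniteDimensional ℂ H) :
    (∀ (F : ℕ → H) (T : H →ₗ.[ℂ] H),
      LinearIndependent ℂ F → IsFrame F →
      T.domain = Submodule.span ℂ (Set.range F) →
      (∀ (n : ℕ) (hn : F n ∈ T.domain), T ⟨F n, hn⟩ = F (n + 1)) →
      ∃ c : ℝ, 0 ≤ c ∧ ∀ g h : H,
        (∀ x : T.domain, (inner ℂ (T x) g : ℂ) = inner ℂ (x : H) h) → ‖h‖ ≤ c * ‖g‖) ∧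
    (∀ (F : ℤ → H) (T : H →ₗ.[ℂ] H),
      LinearIndependent ℂ F → IsFrame F →
      T.domain = Submodule.span ℂ (Set.range F) →
      (∀ (n : ℤ) (hn : F n ∈ T.domain), T ⟨F n, hn⟩ = F (n + 1)) →
      ∃ c : ℝ, 0 ≤ c ∧ ∀ g h : H,
        (∀ x : T.domain, (inner ℂ (T x) g : ℂ) = inner ℂ (x : H) h) → ‖h‖ ≤ c * ‖g‖) := by
  constructor
  · intro F T hli hF hdom hT
    exact gen_adjoint_bounded F (· + 1) (add_left_injective 1) T hF hdom hT
  · intro F T hli hF hdom hT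
    exact gen_adjoint_bounded F (· + 1) (add_left_injective 1) T hF hdom hT
end
end

section
/- Let I = ℕ or I = ℤ, and let F = (f_n)_{n∈I} be a frame for a complex separable infinite-dimensional Hilbert space H with synthesis operator U : ℓ²(I) → H, and suppose ker U is invariant under the right shift R on ℓ²(I). Then the unique bounded linear operator T : H → H with T f_n = f_{n+1} for all n ∈ I is given by T = U R U†, where U† = U*(UU*)⁻¹ is the pseudo-inverse of U (the frame operator S = UU* being positive and boundedly invertible). -/
open MeasureTheory
noncomputable section

section Aux

variable {H : Type*} [NormedAddCommGroup H] [InnerProductSpace ℂ H] [CompleteSpace H]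

lemma U_single {I : Type*} [DecidableEq I] (F : I → H) (U : lp (fun _ : I => ℂ) 2 →L[ℂ] H)
    (hU : ∀ c : lp (fun _ : I => ℂ) 2, U c = ∑' n : I, c n • F n) (i : I) (a : ℂ) :
    U (lp.single 2 i a) = a • F i := by
  rw [hU]
  rw [tsum_eq_single i]
  · rw [lp.single_apply_self (E := fun _ : I => ℂ)]
  · intro n hn
    rw [lp.single_apply_ne (E := fun _ : I => ℂ) 2 i a hn, zero_smul]

end Aux

/-- For a frame `F = (fₙ)_{n∈I}` (`I = ℕ` or `I = ℤ`) with synthesis operator `U` whose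
kernel is invariant under the right shift `R` on `ℓ²(I)`, the unique bounded operator `T`
with `T fₙ = fₙ₊₁` is given by `T = U R U†`, where `U† = U*(UU*)⁻¹` is the pseudo-inverse
of `U` (here `Sinv` is the bounded inverse of the frame operator `S = UU*`). -/
theorem generating_operator_eq_URUdagger
    {H : Type*} [NormedAddCommGroup H] [InnerProductSpace ℂ H] [CompleteSpace H]
    [TopologicalSpace.SeparableSpace H] (hdim : ¬ FiniteDimensional ℂ H) :
    (∀ (F : ℕ → H) (U : lp (fun _ : ℕ => ℂ) 2 →L[ℂ] H)
        (R : lp (fun _ : ℕ => ℂ) 2 →L[ℂ] lp (fun _ : ℕ => ℂ) 2) (Sinv : H →L[ℂ] H)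
        (T : H →L[ℂ] H),
      IsFrame F →
      (∀ c : lp (fun _ : ℕ => ℂ) 2, U c = ∑' n : ℕ, c n • F n) →
      (∀ c : lp (fun _ : ℕ => ℂ) 2, (R c) 0 = 0 ∧ ∀ n : ℕ, (R c) (n + 1) = c n) →
      (∀ c : lp (fun _ : ℕ => ℂ) 2, U c = 0 → U (R c) = 0) →
      ((U ∘L ContinuousLinearMap.adjoint U) ∘L Sinv = ContinuousLinearMap.id ℂ H) →
      (Sinv ∘L (U ∘L ContinuousLinearMap.adjoint U) = ContinuousLinearMap.id ℂ H) →
      (∀ n : ℕ, T (F n) = F (n + 1)) →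
      T = ((U ∘L R) ∘L ContinuousLinearMap.adjoint U) ∘L Sinv) ∧
    (∀ (F : ℤ → H) (U : lp (fun _ : ℤ => ℂ) 2 →L[ℂ] H)
        (R : lp (fun _ : ℤ => ℂ) 2 →L[ℂ] lp (fun _ : ℤ => ℂ) 2) (Sinv : H →L[ℂ] H)
        (T : H →L[ℂ] H),
      IsFrame F →
      (∀ c : lp (fun _ : ℤ => ℂ) 2, U c = ∑' n : ℤ, c n • F n) →
      (∀ (c : lp (fun _ : ℤ => ℂ) 2) (n : ℤ), (R c) n = c (n - 1)) →
      (∀ c : lp (fun _ : ℤ => ℂ) 2, U c = 0 → U (R c) = 0) →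
      ((U ∘L ContinuousLinearMap.adjoint U) ∘L Sinv = ContinuousLinearMap.id ℂ H) →
      (Sinv ∘L (U ∘L ContinuousLinearMap.adjoint U) = ContinuousLinearMap.id ℂ H) →
      (∀ n : ℤ, T (F n) = F (n + 1)) →
      T = ((U ∘L R) ∘L ContinuousLinearMap.adjoint U) ∘L Sinv) := by
  haveI : Fact ((1 : ENNReal) ≤ 2) := ⟨by norm_num⟩
  constructor
  · intro F U R Sinv T _hF hU hR _hker hid1 _hid2 hT
    have hRsingle : ∀ (i : ℕ) (a : ℂ), R (lp.single 2 i a) = lp.single 2 (i + 1) a := by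
      intro i a
      apply lp.ext
      funext j
      rcases j with _ | j
      · exact ((hR _).1).trans
          (lp.single_apply_ne (E := fun _ : ℕ => ℂ) 2 (i + 1) a (by omega)).symm
      · rw [(hR _).2 j]
        rcases eq_or_ne j i with h | h
        · subst h
          rw [lp.single_apply_self (E := fun _ : ℕ => ℂ),
            lp.single_apply_self (E := fun _ : ℕ => ℂ)]
        · rw [lp.single_apply_ne (E := fun _ : ℕ => ℂ) 2 i a h,
            lp.single_apply_ne (E := fun _ : ℕ => ℂ) 2 (i + 1) a (by omega)]
    have key : ∀ c : lp (fun _ : ℕ => ℂ) 2, T (U c) = U (R c) := by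
      intro c
      have hs := lp.hasSum_single (by norm_num : (2 : ENNReal) ≠ ⊤) c
      have h1 : HasSum (fun i : ℕ => (T ∘L U) (lp.single 2 i (c i))) ((T ∘L U) c) :=
        (T ∘L U).hasSum hs
      have h2 : HasSum (fun i : ℕ => (U ∘L R) (lp.single 2 i (c i))) ((U ∘L R) c) :=
        (U ∘L R).hasSum hs
      have heq : (fun i : ℕ => (T ∘L U) (lp.single 2 i (c i)))
          = fun i : ℕ => (U ∘L R) (lp.single 2 i (c i)) := by
        funext i
        simp only [ContinuousLinearMap.comp_apply]
        rw [U_single F U hU, hRsingle, U_single F U hU, T.map_smul, hT]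
      rw [heq] at h1
      exact h1.unique h2
    ext f
    have hf : U ((ContinuousLinearMap.adjoint U) (Sinv f)) = f := by
      have := ContinuousLinearMap.ext_iff.mp hid1 f
      simpa using this
    calc T f = T (U ((ContinuousLinearMap.adjoint U) (Sinv f))) := by rw [hf]
      _ = U (R ((ContinuousLinearMap.adjoint U) (Sinv f))) := key _
      _ = _ := rfl
  · intro F U R Sinv T _hF hU hR _hker hid1 _hid2 hT
    have hRsingle : ∀ (i : ℤ) (a : ℂ), R (lp.single 2 i a) = lp.single 2 (i + 1) a := by
      intro i a
      apply lp.ext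
      funext j
      rw [hR]
      rcases eq_or_ne j (i + 1) with h | h
      · subst h
        rw [show i + 1 - 1 = i by ring, lp.single_apply_self (E := fun _ : ℤ => ℂ),
          lp.single_apply_self (E := fun _ : ℤ => ℂ)]
      · rw [lp.single_apply_ne (E := fun _ : ℤ => ℂ) 2 i a (by omega),
          lp.single_apply_ne (E := fun _ : ℤ => ℂ) 2 (i + 1) a h]
    have key : ∀ c : lp (fun _ : ℤ => ℂ) 2, T (U c) = U (R c) := by
      intro c
      have hs := lp.hasSum_single (by norm_num : (2 : ENNReal) ≠ ⊤) c
      have h1 : HasSum (fun i : ℤ => (T ∘L U) (lp.single 2 i (c i))) ((T ∘L U) c) :=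
        (T ∘L U).hasSum hs
      have h2 : HasSum (fun i : ℤ => (U ∘L R) (lp.single 2 i (c i))) ((U ∘L R) c) :=
        (U ∘L R).hasSum hs
      have heq : (fun i : ℤ => (T ∘L U) (lp.single 2 i (c i)))
          = fun i : ℤ => (U ∘L R) (lp.single 2 i (c i)) := by
        funext i
        simp only [ContinuousLinearMap.comp_apply]
        rw [U_single F U hU, hRsingle, U_single F U hU, T.map_smul, hT]
      rw [heq] at h1
      exact h1.unique h2
    ext f
    have hf : U ((ContinuousLinearMap.adjoint U) (Sinv f)) = f := by
      have := ContinuousLinearMap.ext_iff.mp hid1 f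
      simpa using this
    calc T f = T (U ((ContinuousLinearMap.adjoint U) (Sinv f))) := by rw [hf]
      _ = U (R ((ContinuousLinearMap.adjoint U) (Sinv f))) := key _
      _ = _ := rfl
end
end

section
/- Let H₁ and H₂ be complex Hilbert spaces, T_j a bounded linear operator on H_j and f_j ∈ H_j for j = 1,2, and suppose (T₁,f₁) and (T₂,f₂) are similar via a bounded bijective operator V : H₁ → H₂. Then (T₁ⁿf₁)_{n∈ℕ} is a frame for H₁ if and only if (T₂ⁿf₂)_{n∈ℕ} is a frame for H₂. Moreover, in the affirmative case V is the unique bounded bijective operator with T₂ = V T₁ V⁻¹ and f₂ = V f₁. -/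
open MeasureTheory
noncomputable section

lemma isFrame_map {I H₁ H₂ : Type*} [NormedAddCommGroup H₁] [InnerProductSpace ℂ H₁]
    [CompleteSpace H₁] [NormedAddCommGroup H₂] [InnerProductSpace ℂ H₂] [CompleteSpace H₂]
    (V : H₁ ≃L[ℂ] H₂) (F : I → H₁) (h : IsFrame F) : IsFrame fun n => V (F n) := by
  obtain ⟨A, B, hA, hB, hab⟩ := h
  set U : H₁ →L[ℂ] H₂ := (V : H₁ →L[ℂ] H₂)
  set S : H₁ →L[ℂ] H₂ := ContinuousLinearMap.adjoint ((V.symm : H₂ →L[ℂ] H₁))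
  set Uad : H₂ →L[ℂ] H₁ := ContinuousLinearMap.adjoint U
  set m : ℝ := ‖S‖ + 1 with hm
  set M : ℝ := ‖Uad‖ + 1 with hM
  have hm0 : 0 < m := by positivity
  have hM0 : 0 < M := by positivity
  have hinv : ∀ g : H₂, S (Uad g) = g := by
    intro g
    apply ext_inner_right ℂ
    intro v
    rw [ContinuousLinearMap.adjoint_inner_left, ContinuousLinearMap.adjoint_inner_left]
    simp [U]
  refine ⟨A / m ^ 2, B * M ^ 2, by positivity, by positivity, fun g => ?_⟩
  have h1 : ‖g‖ ≤ m * ‖Uad g‖ := by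
    calc ‖g‖ = ‖S (Uad g)‖ := by rw [hinv]
    _ ≤ ‖S‖ * ‖Uad g‖ := S.le_opNorm _
    _ ≤ m * ‖Uad g‖ := by
        apply mul_le_mul_of_nonneg_right _ (norm_nonneg _)
        simp [hm]
  have h2 : ‖Uad g‖ ≤ M * ‖g‖ := by
    calc ‖Uad g‖ ≤ ‖Uad‖ * ‖g‖ := Uad.le_opNorm _
    _ ≤ M * ‖g‖ := by
        apply mul_le_mul_of_nonneg_right _ (norm_nonneg _)
        simp [hM]
  have key : ∀ n, (inner ℂ g (V (F n)) : ℂ) = inner ℂ (Uad g) (F n) := by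
    intro n
    rw [ContinuousLinearMap.adjoint_inner_left]
    rfl
  have hsum : ∑' n : I, ‖(inner ℂ g (V (F n)) : ℂ)‖ ^ 2
      = ∑' n : I, ‖(inner ℂ (Uad g) (F n) : ℂ)‖ ^ 2 := by
    congr 1; ext n; rw [key]
  obtain ⟨hl, hu⟩ := hab (Uad g)
  constructor
  · rw [hsum]
    have : ‖g‖ ^ 2 ≤ m ^ 2 * ‖Uad g‖ ^ 2 := by nlinarith [norm_nonneg g, norm_nonneg (Uad g)]
    calc A / m ^ 2 * ‖g‖ ^ 2 ≤ A * ‖Uad g‖ ^ 2 := by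
          rw [div_mul_eq_mul_div, div_le_iff₀ (by positivity)]; nlinarith
    _ ≤ _ := hl
  · rw [hsum]
    calc ∑' n : I, ‖(inner ℂ (Uad g) (F n) : ℂ)‖ ^ 2 ≤ B * ‖Uad g‖ ^ 2 := hu
    _ ≤ B * M ^ 2 * ‖g‖ ^ 2 := by
        have hsq : ‖Uad g‖ ^ 2 ≤ M ^ 2 * ‖g‖ ^ 2 := by
          nlinarith [norm_nonneg g, norm_nonneg (Uad g)]
        nlinarith [hB.le, hsq]

/-- If `(T₁,f₁)` and `(T₂,f₂)` are similar via the bounded bijective operator `V`, then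
`(T₁ⁿf₁)_{n∈ℕ}` is a frame for `H₁` iff `(T₂ⁿf₂)_{n∈ℕ}` is a frame for `H₂`; in the
affirmative case `V` is the unique such intertwiner. -/
theorem similar_pairs_frame_iff_nat
    {H₁ H₂ : Type*} [NormedAddCommGroup H₁] [InnerProductSpace ℂ H₁] [CompleteSpace H₁]
    [NormedAddCommGroup H₂] [InnerProductSpace ℂ H₂] [CompleteSpace H₂]
    (T₁ : H₁ →L[ℂ] H₁) (T₂ : H₂ →L[ℂ] H₂) (f₁ : H₁) (f₂ : H₂)
    (V : H₁ ≃L[ℂ] H₂) (hV : ∀ x : H₁, T₂ (V x) = V (T₁ x)) (hf : f₂ = V f₁) :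
    ((IsFrame fun n : ℕ => (T₁ ^ n) f₁) ↔ (IsFrame fun n : ℕ => (T₂ ^ n) f₂)) ∧
    ((IsFrame fun n : ℕ => (T₁ ^ n) f₁) →
      ∀ W : H₁ ≃L[ℂ] H₂, (∀ x : H₁, T₂ (W x) = W (T₁ x)) → f₂ = W f₁ → W = V) := by
  have hpow : ∀ (W : H₁ ≃L[ℂ] H₂), (∀ x, T₂ (W x) = W (T₁ x)) →
      ∀ (n : ℕ) (x : H₁), (T₂ ^ n) (W x) = W ((T₁ ^ n) x) := by
    intro W hW n
    induction n with
    | zero => simp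
    | succ k ih =>
      intro x
      rw [pow_succ', pow_succ', ContinuousLinearMap.mul_apply, ContinuousLinearMap.mul_apply,
        ih x, hW]
  have heq : ∀ n : ℕ, (T₂ ^ n) f₂ = V ((T₁ ^ n) f₁) := fun n => by
    rw [hf, hpow V hV]
  refine ⟨⟨fun h => ?_, fun h => ?_⟩, fun h W hW hfW => ?_⟩
  · have := isFrame_map V _ h
    convert this using 2 with n
    exact heq n
  · have := isFrame_map V.symm _ h
    convert this using 2 with n
    rw [heq n]; simp
  · -- uniqueness
    set F : ℕ → H₁ := fun n => (T₁ ^ n) f₁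
    obtain ⟨A, B, hA, hB, hab⟩ := h
    have hdense : Dense ((Submodule.span ℂ (Set.range F) : Submodule ℂ H₁) : Set H₁) := by
      rw [Submodule.dense_iff_topologicalClosure_eq_top,
        Submodule.topologicalClosure_eq_top_iff]
      rw [Submodule.eq_bot_iff]
      intro g hg
      have hz : ∀ n, (inner ℂ g (F n) : ℂ) = 0 := by
        intro n
        have : (inner ℂ (F n) g : ℂ) = 0 :=
          hg _ (Submodule.subset_span ⟨n, rfl⟩)
        rw [← inner_conj_symm, this, map_zero]
      have hts : ∑' n : ℕ, ‖(inner ℂ g (F n) : ℂ)‖ ^ 2 = 0 := by simp [hz]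
      have := (hab g).1
      rw [hts] at this
      have hg2 : ‖g‖ ^ 2 = 0 :=
        le_antisymm (le_of_mul_le_mul_left (by simpa using this) hA) (sq_nonneg _)
      have : ‖g‖ = 0 := by
        simpa using pow_eq_zero_iff (n := 2) (by norm_num) |>.1 hg2
      simpa using this
    have hCLM : (W : H₁ →L[ℂ] H₂) = (V : H₁ →L[ℂ] H₂) := by
      apply ContinuousLinearMap.ext_on hdense
      rintro x ⟨n, rfl⟩
      have h1 : W (F n) = (T₂ ^ n) f₂ := by
        rw [hfW, hpow W hW]
      have h2 : V (F n) = (T₂ ^ n) f₂ := by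
        rw [hf, hpow V hV]
      simpa using h1.trans h2.symm
    ext x
    exact DFunLike.congr_fun hCLM x
end
end

section
/- Let H₁ and H₂ be complex Hilbert spaces, T_j a bounded bijective linear operator on H_j and f_j ∈ H_j for j = 1,2, and suppose (T₁,f₁) and (T₂,f₂) are similar via a bounded bijective operator V : H₁ → H₂. Then (T₁ⁿf₁)_{n∈ℤ} is a frame for H₁ if and only if (T₂ⁿf₂)_{n∈ℤ} is a frame for H₂. Moreover, in the affirmative case V is the unique bounded bijective operator with T₂ = V T₁ V⁻¹ and f₂ = V f₁. -/
open MeasureTheory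
noncomputable section

open ContinuousLinearMap in
lemma IsFrame.map {I H₁ H₂ : Type*} [NormedAddCommGroup H₁] [InnerProductSpace ℂ H₁]
    [CompleteSpace H₁] [NormedAddCommGroup H₂] [InnerProductSpace ℂ H₂] [CompleteSpace H₂]
    {F : I → H₁} (h : IsFrame F) (V : H₁ ≃L[ℂ] H₂) : IsFrame fun n => V (F n) := by
  obtain ⟨A, B, hA, hB, h⟩ := h
  set C : ℝ := max ‖adjoint (V.symm : H₂ →L[ℂ] H₁)‖ 1 with hC
  set D : ℝ := max ‖adjoint (V : H₁ →L[ℂ] H₂)‖ 1 with hD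
  have hC1 : (1:ℝ) ≤ C := le_max_right _ _
  have hD1 : (1:ℝ) ≤ D := le_max_right _ _
  refine ⟨A / C ^ 2, B * D ^ 2, by positivity, by positivity, fun g => ?_⟩
  have hsum : (∑' n : I, ‖(inner ℂ g (V (F n)) : ℂ)‖ ^ 2)
      = ∑' n : I, ‖(inner ℂ (adjoint (V : H₁ →L[ℂ] H₂) g) (F n) : ℂ)‖ ^ 2 := by
    refine tsum_congr fun n => ?_
    rw [ContinuousLinearMap.adjoint_inner_left]
    rfl
  have hVg : adjoint (V.symm : H₂ →L[ℂ] H₁) (adjoint (V : H₁ →L[ℂ] H₂) g) = g := by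
    rw [← ContinuousLinearMap.comp_apply, ← ContinuousLinearMap.adjoint_comp]
    simp [ContinuousLinearMap.adjoint_id]
  have hg_le : ‖g‖ ≤ C * ‖adjoint (V : H₁ →L[ℂ] H₂) g‖ := by
    calc ‖g‖ = ‖adjoint (V.symm : H₂ →L[ℂ] H₁) (adjoint (V : H₁ →L[ℂ] H₂) g)‖ := by rw [hVg]
    _ ≤ ‖adjoint (V.symm : H₂ →L[ℂ] H₁)‖ * ‖adjoint (V : H₁ →L[ℂ] H₂) g‖ := le_opNorm _ _
    _ ≤ C * ‖adjoint (V : H₁ →L[ℂ] H₂) g‖ := by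
        gcongr; exact le_max_left _ _
  have hVg_le : ‖adjoint (V : H₁ →L[ℂ] H₂) g‖ ≤ D * ‖g‖ := by
    calc ‖adjoint (V : H₁ →L[ℂ] H₂) g‖ ≤ ‖adjoint (V : H₁ →L[ℂ] H₂)‖ * ‖g‖ := le_opNorm _ _
    _ ≤ D * ‖g‖ := by gcongr; exact le_max_left _ _
  obtain ⟨h1, h2⟩ := h (adjoint (V : H₁ →L[ℂ] H₂) g)
  rw [hsum]
  constructor
  · have : ‖g‖ ^ 2 ≤ C ^ 2 * ‖adjoint (V : H₁ →L[ℂ] H₂) g‖ ^ 2 := by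
      nlinarith [norm_nonneg g, norm_nonneg (adjoint (V : H₁ →L[ℂ] H₂) g)]
    calc A / C ^ 2 * ‖g‖ ^ 2 ≤ A / C ^ 2 * (C ^ 2 * ‖adjoint (V : H₁ →L[ℂ] H₂) g‖ ^ 2) := by
          apply mul_le_mul_of_nonneg_left this; positivity
    _ = A * ‖adjoint (V : H₁ →L[ℂ] H₂) g‖ ^ 2 := by
          have hC0 : (C:ℝ) ^ 2 ≠ 0 := by positivity
          field_simp
    _ ≤ _ := h1
  · calc _ ≤ B * ‖adjoint (V : H₁ →L[ℂ] H₂) g‖ ^ 2 := h2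
    _ ≤ B * (D ^ 2 * ‖g‖ ^ 2) := by
        apply mul_le_mul_of_nonneg_left _ hB.le
        nlinarith [norm_nonneg g, norm_nonneg (adjoint (V : H₁ →L[ℂ] H₂) g)]
    _ = B * D ^ 2 * ‖g‖ ^ 2 := by ring

/-- conjugation monoid hom -/
def conjHom {H₁ H₂ : Type*} [NormedAddCommGroup H₁] [InnerProductSpace ℂ H₁]
    [NormedAddCommGroup H₂] [InnerProductSpace ℂ H₂]
    (V : H₁ ≃L[ℂ] H₂) : (H₁ ≃L[ℂ] H₁) →* (H₂ ≃L[ℂ] H₂) where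
  toFun S := (V.symm.trans S).trans V
  map_one' := by
    ext x
    show V (V.symm x) = x
    simp
  map_mul' S T := by
    ext x
    show V (S (T (V.symm x))) = V (S (V.symm (V (T (V.symm x)))))
    simp

lemma myconj_zpow {H₁ H₂ : Type*} [NormedAddCommGroup H₁] [InnerProductSpace ℂ H₁]
    [NormedAddCommGroup H₂] [InnerProductSpace ℂ H₂]
    (V : H₁ ≃L[ℂ] H₂) (T₁ : H₁ ≃L[ℂ] H₁) (T₂ : H₂ ≃L[ℂ] H₂)
    (hV : ∀ x : H₁, T₂ (V x) = V (T₁ x)) (n : ℤ) (x : H₁) :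
    (T₂ ^ n) (V x) = V ((T₁ ^ n) x) := by
  have hT : T₂ = conjHom V T₁ := by
    ext y
    have := hV (V.symm y)
    simpa [conjHom] using this
  have : T₂ ^ n = conjHom V (T₁ ^ n) := by rw [hT, ← map_zpow]
  rw [this]
  simp [conjHom]

/-- If `(T₁,f₁)` and `(T₂,f₂)` (with `T₁, T₂` bounded and bijective) are similar via the
bounded bijective operator `V`, then `(T₁ⁿf₁)_{n∈ℤ}` is a frame for `H₁` iff
`(T₂ⁿf₂)_{n∈ℤ}` is a frame for `H₂`; in the affirmative case `V` is the unique such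
intertwiner. -/
theorem similar_pairs_frame_iff_int
    {H₁ H₂ : Type*} [NormedAddCommGroup H₁] [InnerProductSpace ℂ H₁] [CompleteSpace H₁]
    [NormedAddCommGroup H₂] [InnerProductSpace ℂ H₂] [CompleteSpace H₂]
    (T₁ : H₁ ≃L[ℂ] H₁) (T₂ : H₂ ≃L[ℂ] H₂) (f₁ : H₁) (f₂ : H₂)
    (V : H₁ ≃L[ℂ] H₂) (hV : ∀ x : H₁, T₂ (V x) = V (T₁ x)) (hf : f₂ = V f₁) :
    ((IsFrame fun n : ℤ => (T₁ ^ n) f₁) ↔ (IsFrame fun n : ℤ => (T₂ ^ n) f₂)) ∧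
    ((IsFrame fun n : ℤ => (T₁ ^ n) f₁) →
      ∀ W : H₁ ≃L[ℂ] H₂, (∀ x : H₁, T₂ (W x) = W (T₁ x)) → f₂ = W f₁ → W = V) := by
  have key1 : ∀ n : ℤ, V ((T₁ ^ n) f₁) = (T₂ ^ n) f₂ := fun n => by
    rw [hf, myconj_zpow V T₁ T₂ hV]
  constructor
  · constructor
    · intro h
      have h2 := h.map V
      have : (fun n : ℤ => V ((T₁ ^ n) f₁)) = fun n : ℤ => (T₂ ^ n) f₂ := funext key1
      rwa [this] at h2
    · intro h
      have h2 := h.map V.symm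
      have : (fun n : ℤ => V.symm ((T₂ ^ n) f₂)) = fun n : ℤ => (T₁ ^ n) f₁ := by
        funext n
        rw [← key1 n, V.symm_apply_apply]
      rwa [this] at h2
  · intro hframe W hW hfW
    have keyW : ∀ n : ℤ, W ((T₁ ^ n) f₁) = V ((T₁ ^ n) f₁) := fun n => by
      rw [key1 n, ← myconj_zpow W T₁ T₂ hW, ← hfW]
    obtain ⟨A, B, hA, hB, hfr⟩ := hframe
    set K := Submodule.span ℂ (Set.range fun n : ℤ => (T₁ ^ n) f₁) with hK
    have horth : Kᗮ = ⊥ := by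
      rw [Submodule.eq_bot_iff]
      intro x hx
      have hin : ∀ n : ℤ, ‖(inner ℂ x ((T₁ ^ n) f₁) : ℂ)‖ ^ 2 = 0 := by
        intro n
        have h0 := (Submodule.mem_orthogonal K x).mp hx ((T₁ ^ n) f₁)
          (Submodule.subset_span ⟨n, rfl⟩)
        rw [← inner_conj_symm, h0]
        simp
      have h1 := (hfr x).1
      rw [tsum_congr hin, tsum_zero] at h1
      have : ‖x‖ ^ 2 ≤ 0 := by nlinarith
      have : ‖x‖ = 0 := by nlinarith [norm_nonneg x]
      simpa using this
    have hdense : Dense (K : Set H₁) :=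
      Submodule.dense_iff_topologicalClosure_eq_top.mpr
        (Submodule.topologicalClosure_eq_top_iff.mpr horth)
    have hEq : ∀ x ∈ K, W x = V x := by
      intro x hx
      refine Submodule.span_induction ?_ ?_ ?_ ?_ hx
      · rintro y ⟨n, rfl⟩
        exact keyW n
      · simp
      · intro a b _ _ ha hb
        simp [map_add, ha, hb]
      · intro c a _ ha
        simp [_root_.map_smul, ha]
    have hall : (fun x => W x) = fun x => V x :=
      Continuous.ext_on hdense W.continuous V.continuous hEq
    exact ContinuousLinearEquiv.ext hall
end
end

section
/- Let H be a complex separable infinite-dimensional Hilbert space, T a bounded bijective linear operator on H, and f₀ ∈ H such that (Tⁿf₀)_{n∈ℤ} is a frame for H with frame operator S. Then S^{-1/2} T S^{1/2} is a unitary operator; in particular, T is similar to a unitary operator. -/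
open MeasureTheory
noncomputable section

/-- If `(Tⁿf₀)_{n∈ℤ}` is a frame for `H` with frame operator `S` (with `T` bounded and
bijective), and `Q` is the positive square root `S^{1/2}` of `S` with inverse `Qi = S^{-1/2}`,
then `S^{-1/2} T S^{1/2}` is unitary (i.e. an isometric surjection); in particular `T` is
similar to a unitary operator. -/
theorem frame_operator_conjugate_unitary
    {H : Type*} [NormedAddCommGroup H] [InnerProductSpace ℂ H] [CompleteSpace H]
    [TopologicalSpace.SeparableSpace H] (hdim : ¬ FiniteDimensional ℂ H)
    (T : H ≃L[ℂ] H) (f₀ : H)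
    (hframe : IsFrame fun n : ℤ => (T ^ n) f₀)
    (S : H →L[ℂ] H)
    (hS : ∀ f : H, S f = ∑' n : ℤ, (inner ℂ f ((T ^ n) f₀) : ℂ) • (T ^ n) f₀)
    (Q Qi : H →L[ℂ] H) (hQpos : Q.IsPositive) (hQsq : Q ∘L Q = S)
    (hQi₁ : Q ∘L Qi = ContinuousLinearMap.id ℂ H)
    (hQi₂ : Qi ∘L Q = ContinuousLinearMap.id ℂ H) :
    ((∀ f : H, ‖(Qi ∘L (T : H →L[ℂ] H) ∘L Q) f‖ = ‖f‖) ∧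
      Function.Surjective (Qi ∘L (T : H →L[ℂ] H) ∘L Q)) ∧
    ∃ (W : H ≃L[ℂ] H) (U : H →L[ℂ] H), (∀ f : H, ‖U f‖ = ‖f‖) ∧ Function.Surjective U ∧
      ∀ x : H, T x = W (U (W.symm x)) := by
  classical
  set T' : H →L[ℂ] H := (T : H →L[ℂ] H) with hT'
  set A : H →L[ℂ] H := ContinuousLinearMap.adjoint T' with hA
  -- pointwise versions of the inverse identities
  have hqi1 : ∀ x : H, Q (Qi x) = x := fun x => by
    have := ContinuousLinearMap.ext_iff.mp hQi₁ x; simpa using this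
  have hqi2 : ∀ x : H, Qi (Q x) = x := fun x => by
    have := ContinuousLinearMap.ext_iff.mp hQi₂ x; simpa using this
  have hSapp : ∀ x : H, S x = Q (Q x) := fun x => by
    have := ContinuousLinearMap.ext_iff.mp hQsq x; simpa using this.symm
  -- equivalences commute with tsum unconditionally
  have map_tsum' : ∀ (e : H ≃L[ℂ] H) (f : ℤ → H), e (∑' n, f n) = ∑' n, e (f n) := by
    intro e f
    by_cases h : Summable f
    · exact ContinuousLinearMap.map_tsum (e : H →L[ℂ] H) h
    · have h2 : ¬ Summable (fun n => e (f n)) := by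
        intro hs
        have := hs.map (e.symm : H →L[ℂ] H) (e.symm : H →L[ℂ] H).continuous
        exact h (by simpa [Function.comp_def] using this)
      rw [tsum_eq_zero_of_not_summable h, tsum_eq_zero_of_not_summable h2, map_zero]
  -- the key identity: T ∘ S ∘ T* = S, i.e. S (A g) = T⁻¹ (S g)
  have key : ∀ g : H, S (A g) = T.symm (S g) := by
    intro g
    have h2 : T (S (A g)) = S g := by
      rw [hS, map_tsum' T]
      have h3 : (fun n : ℤ => T ((inner ℂ (A g) ((T ^ n) f₀) : ℂ) • (T ^ n) f₀))
          = fun n : ℤ => (fun m : ℤ => (inner ℂ g ((T ^ m) f₀) : ℂ) • (T ^ m) f₀)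
              ((Equiv.addRight (1 : ℤ)) n) := by
        funext n
        have hz : (T ^ (n + 1)) f₀ = T ((T ^ n) f₀) := by
          rw [show n + 1 = 1 + n from add_comm n 1, zpow_one_add]; rfl
        have hinner : (inner ℂ (A g) ((T ^ n) f₀) : ℂ) = inner ℂ g ((T ^ (n + 1)) f₀) := by
          rw [hA, ContinuousLinearMap.adjoint_inner_left, hz]; rfl
        simp only [_root_.map_smul, hinner, Equiv.coe_addRight, hz]
      rw [h3, Equiv.tsum_eq (Equiv.addRight (1 : ℤ))
        (fun m : ℤ => (inner ℂ g ((T ^ m) f₀) : ℂ) • (T ^ m) f₀), ← hS]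
    calc S (A g) = T.symm (T (S (A g))) := (T.symm_apply_apply _).symm
      _ = T.symm (S g) := by rw [h2]
  -- adjoint of Qi is Qi
  have hQadj : ContinuousLinearMap.adjoint Q = Q := by
    rw [← ContinuousLinearMap.star_eq_adjoint]; exact hQpos.isSelfAdjoint
  have hQiadj : ContinuousLinearMap.adjoint Qi = Qi := by
    have h1 : ContinuousLinearMap.adjoint Qi ∘L Q = ContinuousLinearMap.id ℂ H := by
      have := congrArg ContinuousLinearMap.adjoint hQi₁
      rwa [ContinuousLinearMap.adjoint_comp, hQadj, ContinuousLinearMap.adjoint_id] at this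
    ext x
    have := ContinuousLinearMap.ext_iff.mp h1 (Qi x)
    simpa [hqi1] using this
  -- the core algebraic step: A (Qi (Qi (T x))) = Qi (Qi x)
  have step1 : ∀ x : H, A (Qi (Qi (T x))) = Qi (Qi x) := by
    intro x
    have h1 : S (A (Qi (Qi (T x)))) = x := by
      rw [key, hSapp, hqi1, hqi1]
      exact T.symm_apply_apply x
    calc A (Qi (Qi (T x))) = Qi (Qi (S (A (Qi (Qi (T x)))))) := by
          rw [hSapp, hqi2, hqi2]
      _ = Qi (Qi x) := by rw [h1]
  set U : H →L[ℂ] H := Qi ∘L T' ∘L Q with hU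
  have hUapp : ∀ f : H, U f = Qi (T (Q f)) := fun f => rfl
  -- U* U = 1 pointwise
  have hUadj : ContinuousLinearMap.adjoint U = Q ∘L A ∘L Qi := by
    rw [hU, ContinuousLinearMap.adjoint_comp, ContinuousLinearMap.adjoint_comp,
      hQadj, hQiadj, ← hA]
    ext x; rfl
  have hUtU : ∀ f : H, ContinuousLinearMap.adjoint U (U f) = f := by
    intro f
    rw [hUadj, hUapp]
    show Q (A (Qi (Qi (T (Q f))))) = f
    rw [step1, hqi1, hqi2]
  -- isometry
  have hiso : ∀ f : H, ‖U f‖ = ‖f‖ := by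
    intro f
    have h1 : (inner ℂ (U f) (U f) : ℂ) = inner ℂ f f := by
      rw [← ContinuousLinearMap.adjoint_inner_left U f (U f), hUtU]
    rw [norm_eq_sqrt_re_inner (𝕜 := ℂ) (U f), norm_eq_sqrt_re_inner (𝕜 := ℂ) f, h1]
  -- surjectivity
  have hsurj : Function.Surjective U := by
    intro y
    refine ⟨Qi (T.symm (Q y)), ?_⟩
    rw [hUapp, hqi1, T.apply_symm_apply, hqi2]
  refine ⟨⟨hiso, hsurj⟩, ?_⟩
  refine ⟨ContinuousLinearEquiv.equivOfInverse Q Qi hqi2 hqi1, U, hiso, hsurj, ?_⟩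
  intro x
  show T x = Q (U (Qi x))
  rw [hUapp, hqi1, hqi1]
end
end
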